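/- arXiv:2207.08216 — 5 statements merged into one kernel-verified Lean document; each statement's English description precedes it below -/
import Mathlib

section
/- Suppose A has full column rank. Then for arbitrary but fixed c ∈ ℝ^ℓ and μ, λ > 0, the function f_joint(x,y) = (1/2)‖Ax − b‖₂² + (λ²/2)‖Dx − y + c‖₂² + μ‖y‖₁ is strictly convex on ℝ^n × ℝ^ℓ. -/
open Matrix BigOperators

noncomputable def fjoint {m n l : ℕ} (A : Matrix (Fin m) (Fin n) ℝ) (b : Fin m → ℝ)
    (D : Matrix (Fin l) (Fin n) ℝ) (c : Fin l → ℝ) (μ lam : ℝ)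
    (x : Fin n → ℝ) (y : Fin l → ℝ) : ℝ :=
  (1/2) * ∑ i, (A.mulVec x i - b i)^2
    + (lam^2/2) * ∑ i, (D.mulVec x i - y i + c i)^2
    + μ * ∑ i, |y i|

private lemma conv_pt (t s u v : ℝ) (ht : 0 < t) (hs : 0 < s) (hts : t + s = 1) :
    (t*u + s*v)^2 ≤ t*u^2 + s*v^2 := by
  nlinarith [sq_nonneg (u - v), mul_pos ht hs]

private lemma conv_pt_strict (t s u v : ℝ) (ht : 0 < t) (hs : 0 < s) (hts : t + s = 1)
    (h : u ≠ v) : (t*u + s*v)^2 < t*u^2 + s*v^2 := by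
  have hne : u - v ≠ 0 := sub_ne_zero.mpr h
  have h2 : (0:ℝ) < (u - v)^2 := by positivity
  nlinarith [mul_pos ht hs]

private lemma conv_sum {ι : Type*} [Fintype ι] (t s : ℝ) (u v : ι → ℝ)
    (ht : 0 < t) (hs : 0 < s) (hts : t + s = 1) :
    ∑ i, (t*u i + s*v i)^2 ≤ t*∑ i, (u i)^2 + s*∑ i, (v i)^2 := by
  rw [Finset.mul_sum, Finset.mul_sum, ← Finset.sum_add_distrib]
  exact Finset.sum_le_sum fun i _ => conv_pt t s _ _ ht hs hts

private lemma conv_sum_strict {ι : Type*} [Fintype ι] (t s : ℝ) (u v : ι → ℝ)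
    (ht : 0 < t) (hs : 0 < s) (hts : t + s = 1) (i0 : ι) (h : u i0 ≠ v i0) :
    ∑ i, (t*u i + s*v i)^2 < t*∑ i, (u i)^2 + s*∑ i, (v i)^2 := by
  rw [Finset.mul_sum, Finset.mul_sum, ← Finset.sum_add_distrib]
  exact Finset.sum_lt_sum (fun i _ => conv_pt t s _ _ ht hs hts)
    ⟨i0, Finset.mem_univ _, conv_pt_strict t s _ _ ht hs hts h⟩

private lemma abs_sum {ι : Type*} [Fintype ι] (t s : ℝ) (u v : ι → ℝ)
    (ht : 0 < t) (hs : 0 < s) :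
    ∑ i, |t*u i + s*v i| ≤ t*∑ i, |u i| + s*∑ i, |v i| := by
  rw [Finset.mul_sum, Finset.mul_sum, ← Finset.sum_add_distrib]
  refine Finset.sum_le_sum fun i _ => ?_
  calc |t*u i + s*v i| ≤ |t*u i| + |s*v i| := abs_add_le _ _
    _ = t*|u i| + s*|v i| := by
        rw [abs_mul, abs_mul, abs_of_pos ht, abs_of_pos hs]

theorem stmt0 {m n l : ℕ} (A : Matrix (Fin m) (Fin n) ℝ) (b : Fin m → ℝ)
    (D : Matrix (Fin l) (Fin n) ℝ) (c : Fin l → ℝ) (μ lam : ℝ)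
    (hμ : 0 < μ) (hlam : 0 < lam)
    (hA : ∀ x : Fin n → ℝ, A.mulVec x = 0 → x = 0) :
    StrictConvexOn ℝ (Set.univ : Set ((Fin n → ℝ) × (Fin l → ℝ)))
      (fun p => fjoint A b D c μ lam p.1 p.2) := by
  refine ⟨convex_univ, fun p _ q _ hpq t s ht hs hts => ?_⟩
  simp only [smul_eq_mul, fjoint]
  have hfst : (t • p + s • q).1 = t • p.1 + s • q.1 := rfl
  have hsnd : (t • p + s • q).2 = t • p.2 + s • q.2 := rfl
  rw [hfst, hsnd]
  have hAe : ∀ i, A.mulVec (t • p.1 + s • q.1) i - b i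
      = t*(A.mulVec p.1 i - b i) + s*(A.mulVec q.1 i - b i) := by
    intro i
    rw [mulVec_add, mulVec_smul, mulVec_smul]
    simp only [Pi.add_apply, Pi.smul_apply, smul_eq_mul]
    linear_combination (b i) * hts
  have hDe : ∀ i, D.mulVec (t • p.1 + s • q.1) i - (t • p.2 + s • q.2) i + c i
      = t*(D.mulVec p.1 i - p.2 i + c i) + s*(D.mulVec q.1 i - q.2 i + c i) := by
    intro i
    rw [mulVec_add, mulVec_smul, mulVec_smul]
    simp only [Pi.add_apply, Pi.smul_apply, smul_eq_mul]
    linear_combination (-c i) * hts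
  have hye : ∀ i, (t • p.2 + s • q.2) i = t * p.2 i + s * q.2 i := by
    intro i; simp
  have E1 : ∑ i, (A.mulVec (t • p.1 + s • q.1) i - b i)^2
      = ∑ i, (t*(A.mulVec p.1 i - b i) + s*(A.mulVec q.1 i - b i))^2 :=
    Finset.sum_congr rfl (fun i _ => by rw [hAe i])
  have E2 : ∑ i, (D.mulVec (t • p.1 + s • q.1) i - (t • p.2 + s • q.2) i + c i)^2
      = ∑ i, (t*(D.mulVec p.1 i - p.2 i + c i) + s*(D.mulVec q.1 i - q.2 i + c i))^2 :=
    Finset.sum_congr rfl (fun i _ => by rw [hDe i])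
  have E3 : ∑ i, |(t • p.2 + s • q.2) i| = ∑ i, |t * p.2 i + s * q.2 i| :=
    Finset.sum_congr rfl (fun i _ => by rw [hye i])
  rw [E1, E2, E3]
  have I3 : ∑ i, |t * p.2 i + s * q.2 i| ≤ t*∑ i, |p.2 i| + s*∑ i, |q.2 i| :=
    abs_sum t s _ _ ht hs
  have hlam2 : (0:ℝ) < lam^2/2 := by positivity
  by_cases hx : p.1 = q.1
  · -- then p.2 ≠ q.2
    have hy : p.2 ≠ q.2 := fun h => hpq (Prod.ext hx h)
    obtain ⟨i0, hi0⟩ := Function.ne_iff.mp hy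
    have I1 : ∑ i, (t*(A.mulVec p.1 i - b i) + s*(A.mulVec q.1 i - b i))^2
        ≤ t*∑ i, (A.mulVec p.1 i - b i)^2 + s*∑ i, (A.mulVec q.1 i - b i)^2 :=
      conv_sum t s _ _ ht hs hts
    have I2 : ∑ i, (t*(D.mulVec p.1 i - p.2 i + c i) + s*(D.mulVec q.1 i - q.2 i + c i))^2
        < t*∑ i, (D.mulVec p.1 i - p.2 i + c i)^2 + s*∑ i, (D.mulVec q.1 i - q.2 i + c i)^2 := by
      refine conv_sum_strict t s _ _ ht hs hts i0 ?_
      rw [hx]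
      intro h
      exact hi0 (by linarith [h] )
    nlinarith [mul_le_mul_of_nonneg_left I1 (by norm_num : (0:ℝ) ≤ 1/2),
      mul_lt_mul_of_pos_left I2 hlam2,
      mul_le_mul_of_nonneg_left I3 hμ.le]
  · obtain ⟨i0, hi0⟩ : ∃ i, A.mulVec p.1 i ≠ A.mulVec q.1 i := by
      by_contra h
      push_neg at h
      apply hx
      have : A.mulVec (p.1 - q.1) = 0 := by
        rw [mulVec_sub]
        funext i; simp [h i]
      have := hA _ this
      exact sub_eq_zero.mp (by funext i; exact congrFun this i)
    have I1 : ∑ i, (t*(A.mulVec p.1 i - b i) + s*(A.mulVec q.1 i - b i))^2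
        < t*∑ i, (A.mulVec p.1 i - b i)^2 + s*∑ i, (A.mulVec q.1 i - b i)^2 := by
      refine conv_sum_strict t s _ _ ht hs hts i0 ?_
      intro h
      exact hi0 (by linarith [h])
    have I2 : ∑ i, (t*(D.mulVec p.1 i - p.2 i + c i) + s*(D.mulVec q.1 i - q.2 i + c i))^2
        ≤ t*∑ i, (D.mulVec p.1 i - p.2 i + c i)^2 + s*∑ i, (D.mulVec q.1 i - q.2 i + c i)^2 :=
      conv_sum t s _ _ ht hs hts
    nlinarith [mul_lt_mul_of_pos_left I1 (by norm_num : (0:ℝ) < 1/2),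
      mul_le_mul_of_nonneg_left I2 hlam2.le,
      mul_le_mul_of_nonneg_left I3 hμ.le]
end

section
/- Suppose A has full column rank. Then for arbitrary but fixed c ∈ ℝ^ℓ and μ, λ > 0, the function f_joint has a unique global minimizer: there exists exactly one pair (x̂, ŷ) ∈ ℝ^n × ℝ^ℓ such that f_joint(x̂, ŷ) ≤ f_joint(x, y) for all (x, y) ∈ ℝ^n × ℝ^ℓ. -/
open Matrix BigOperators Filter

private lemma aux_sum_sq_ge {k : ℕ} (v : Fin k → ℝ) : ‖v‖^2 ≤ ∑ i, (v i)^2 := by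
  have h0 : (0:ℝ) ≤ ∑ i, (v i)^2 := Finset.sum_nonneg fun i _ => sq_nonneg _
  have h : ‖v‖ ≤ Real.sqrt (∑ i, (v i)^2) := by
    rw [pi_norm_le_iff_of_nonneg (Real.sqrt_nonneg _)]
    intro i
    rw [Real.norm_eq_abs, ← Real.sqrt_sq_eq_abs]
    exact Real.sqrt_le_sqrt (Finset.single_le_sum (fun j _ => sq_nonneg (v j)) (Finset.mem_univ i))
  calc ‖v‖^2 ≤ Real.sqrt (∑ i, (v i)^2) ^ 2 := pow_le_pow_left₀ (norm_nonneg _) h 2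
    _ = ∑ i, (v i)^2 := Real.sq_sqrt h0

private lemma aux_sum_abs_ge {k : ℕ} (y : Fin k → ℝ) : ‖y‖ ≤ ∑ i, |y i| := by
  rw [pi_norm_le_iff_of_nonneg (Finset.sum_nonneg fun i _ => abs_nonneg _)]
  intro i
  rw [Real.norm_eq_abs]
  exact Finset.single_le_sum (fun j _ => abs_nonneg (y j)) (Finset.mem_univ i)

private lemma aux_sq_mid {k : ℕ} (s t : Fin k → ℝ) :
    ∑ i, ((s i + t i)/2)^2
      = (∑ i, (s i)^2 + ∑ i, (t i)^2)/2 - ∑ i, ((s i - t i)/2)^2 := by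
  rw [← Finset.sum_add_distrib, Finset.sum_div, ← Finset.sum_sub_distrib]
  exact Finset.sum_congr rfl fun i _ => by ring

private lemma aux_abs_mid {k : ℕ} (u v : Fin k → ℝ) :
    ∑ i, |(u i + v i)/2| ≤ (∑ i, |u i| + ∑ i, |v i|)/2 := by
  rw [← Finset.sum_add_distrib, Finset.sum_div]
  apply Finset.sum_le_sum
  intro i _
  rw [add_div, add_div]
  calc |u i/2 + v i/2| ≤ |u i/2| + |v i/2| := abs_add_le _ _
    _ = |u i|/2 + |v i|/2 := by rw [abs_div, abs_div]; norm_num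

theorem stmt1 {m n l : ℕ} (A : Matrix (Fin m) (Fin n) ℝ) (b : Fin m → ℝ)
    (D : Matrix (Fin l) (Fin n) ℝ) (c : Fin l → ℝ) (μ lam : ℝ)
    (hμ : 0 < μ) (hlam : 0 < lam)
    (hA : ∀ x : Fin n → ℝ, A.mulVec x = 0 → x = 0) :
    ∃! p : (Fin n → ℝ) × (Fin l → ℝ),
      ∀ q : (Fin n → ℝ) × (Fin l → ℝ),
        fjoint A b D c μ lam p.1 p.2 ≤ fjoint A b D c μ lam q.1 q.2 := by
  have hlam2 : (0:ℝ) < lam^2/2 := by positivity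
  -- generic lower bounds on fjoint pieces
  have hterm1 : ∀ (x : Fin n → ℝ) (y : Fin l → ℝ),
      (1/2) * ∑ i, (A.mulVec x i - b i)^2 ≤ fjoint A b D c μ lam x y := by
    intro x y
    unfold fjoint
    have h2 : (0:ℝ) ≤ (lam^2/2) * ∑ i, (D.mulVec x i - y i + c i)^2 :=
      mul_nonneg hlam2.le (Finset.sum_nonneg fun i _ => sq_nonneg _)
    have h3 : (0:ℝ) ≤ μ * ∑ i, |y i| :=
      mul_nonneg hμ.le (Finset.sum_nonneg fun i _ => abs_nonneg _)
    linarith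
  have hterm3 : ∀ (x : Fin n → ℝ) (y : Fin l → ℝ),
      μ * ∑ i, |y i| ≤ fjoint A b D c μ lam x y := by
    intro x y
    unfold fjoint
    have h1 : (0:ℝ) ≤ (1/2) * ∑ i, (A.mulVec x i - b i)^2 :=
      mul_nonneg (by norm_num) (Finset.sum_nonneg fun i _ => sq_nonneg _)
    have h2 : (0:ℝ) ≤ (lam^2/2) * ∑ i, (D.mulVec x i - y i + c i)^2 :=
      mul_nonneg hlam2.le (Finset.sum_nonneg fun i _ => sq_nonneg _)
    linarith
  -- continuity
  have hcont : Continuous (fun p : (Fin n → ℝ) × (Fin l → ℝ) => fjoint A b D c μ lam p.1 p.2) := by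
    unfold fjoint Matrix.mulVec dotProduct
    fun_prop
  -- antilipschitz constant for A
  obtain ⟨K, hK0, hKA⟩ := (Matrix.mulVecLin A).exists_antilipschitzWith (by
    rw [LinearMap.ker_eq_bot']
    intro x hx
    exact hA x (by simpa using hx))
  have hAx : ∀ x : Fin n → ℝ, ‖x‖ ≤ K * ‖A.mulVec x‖ := by
    intro x
    have := hKA.le_mul_dist x 0
    simpa [Matrix.mulVecLin_apply, dist_eq_norm] using this
  -- coercivity
  have hcoer : Tendsto (fun p : (Fin n → ℝ) × (Fin l → ℝ) => fjoint A b D c μ lam p.1 p.2)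
      (cocompact _) atTop := by
    rw [tendsto_atTop]
    intro C
    set R : ℝ := max ((K:ℝ) * (‖b‖ + Real.sqrt (2*|C|) + 1)) ((|C|+1)/μ) with hR
    filter_upwards [tendsto_norm_cocompact_atTop.eventually_ge_atTop R] with p hp
    have hpn : ‖p‖ = max ‖p.1‖ ‖p.2‖ := rfl
    rcases le_total ‖p.1‖ ‖p.2‖ with hc | hc
    · -- y is big
      have hy : (|C|+1)/μ ≤ ‖p.2‖ := by
        rw [hpn, max_eq_right hc] at hp
        exact le_trans (le_max_right _ _) hp
      have : |C| + 1 ≤ μ * ‖p.2‖ := by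
        rw [div_le_iff₀ hμ] at hy; linarith
      have h2 : μ * ‖p.2‖ ≤ μ * ∑ i, |p.2 i| :=
        mul_le_mul_of_nonneg_left (aux_sum_abs_ge p.2) hμ.le
      have := hterm3 p.1 p.2
      have habs : C ≤ |C| := le_abs_self C
      linarith
    · -- x is big
      have hx : (K:ℝ) * (‖b‖ + Real.sqrt (2*|C|) + 1) ≤ ‖p.1‖ := by
        rw [hpn, max_eq_left hc] at hp
        exact le_trans (le_max_left _ _) hp
      have hKpos : (0:ℝ) < K := hK0
      have h1 : ‖b‖ + Real.sqrt (2*|C|) + 1 ≤ ‖A.mulVec p.1‖ := by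
        have h2 := hAx p.1
        have : (K:ℝ) * (‖b‖ + Real.sqrt (2*|C|) + 1) ≤ (K:ℝ) * ‖A.mulVec p.1‖ :=
          le_trans hx h2
        exact le_of_mul_le_mul_left this hKpos
    -- ‖Ax - b‖ ≥ sqrt(2|C|)+1
      have h3 : Real.sqrt (2*|C|) + 1 ≤ ‖(fun i => A.mulVec p.1 i - b i)‖ := by
        have : ‖A.mulVec p.1‖ - ‖b‖ ≤ ‖A.mulVec p.1 - b‖ := norm_sub_norm_le _ _
        have he : (fun i => A.mulVec p.1 i - b i) = A.mulVec p.1 - b := rfl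
        rw [he]
        linarith
      have h4 : (Real.sqrt (2*|C|) + 1)^2 ≤ ∑ i, (A.mulVec p.1 i - b i)^2 := by
        calc (Real.sqrt (2*|C|) + 1)^2 ≤ ‖(fun i => A.mulVec p.1 i - b i)‖^2 :=
              pow_le_pow_left₀ (by positivity) h3 2
          _ ≤ ∑ i, (A.mulVec p.1 i - b i)^2 := aux_sum_sq_ge _
      have h5 : 2*|C| ≤ (Real.sqrt (2*|C|) + 1)^2 := by
        have := Real.sq_sqrt (by positivity : (0:ℝ) ≤ 2*|C|)
        nlinarith [Real.sqrt_nonneg (2*|C|)]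
      have := hterm1 p.1 p.2
      have habs : C ≤ |C| := le_abs_self C
      linarith
  -- existence
  obtain ⟨p, hp⟩ := hcont.exists_forall_le hcoer
  refine ⟨p, fun q => hp q, ?_⟩
  -- uniqueness
  intro q hq
  have hpq : fjoint A b D c μ lam p.1 p.2 = fjoint A b D c μ lam q.1 q.2 :=
    le_antisymm (hp q) (hq p)
  -- midpoint
  set xm : Fin n → ℝ := fun j => (q.1 j + p.1 j)/2 with hxm
  set ym : Fin l → ℝ := fun j => (q.2 j + p.2 j)/2 with hym
  have hAm : ∀ i, A.mulVec xm i = (A.mulVec q.1 i + A.mulVec p.1 i)/2 := by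
    intro i
    simp only [hxm, Matrix.mulVec, dotProduct]
    rw [← Finset.sum_add_distrib, Finset.sum_div]
    exact Finset.sum_congr rfl fun j _ => by ring
  have hDm : ∀ i, D.mulVec xm i = (D.mulVec q.1 i + D.mulVec p.1 i)/2 := by
    intro i
    simp only [hxm, Matrix.mulVec, dotProduct]
    rw [← Finset.sum_add_distrib, Finset.sum_div]
    exact Finset.sum_congr rfl fun j _ => by ring
  set G1 : ℝ := ∑ i, (((A.mulVec q.1 i - b i) - (A.mulVec p.1 i - b i))/2)^2 with hG1
  set G2 : ℝ := ∑ i, (((D.mulVec q.1 i - q.2 i + c i) - (D.mulVec p.1 i - p.2 i + c i))/2)^2 with hG2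
  have hG1n : 0 ≤ G1 := Finset.sum_nonneg fun i _ => sq_nonneg _
  have hG2n : 0 ≤ G2 := Finset.sum_nonneg fun i _ => sq_nonneg _
  have hmid : fjoint A b D c μ lam xm ym
      ≤ (fjoint A b D c μ lam q.1 q.2 + fjoint A b D c μ lam p.1 p.2)/2
        - (1/2)*G1 - (lam^2/2)*G2 := by
    unfold fjoint
    have e1 : ∑ i, (A.mulVec xm i - b i)^2
        = (∑ i, (A.mulVec q.1 i - b i)^2 + ∑ i, (A.mulVec p.1 i - b i)^2)/2 - G1 := by
      rw [hG1]
      rw [← aux_sq_mid (fun i => A.mulVec q.1 i - b i) (fun i => A.mulVec p.1 i - b i)]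
      exact Finset.sum_congr rfl fun i _ => by rw [hAm i]; ring
    have e2 : ∑ i, (D.mulVec xm i - ym i + c i)^2
        = (∑ i, (D.mulVec q.1 i - q.2 i + c i)^2 + ∑ i, (D.mulVec p.1 i - p.2 i + c i)^2)/2 - G2 := by
      rw [hG2]
      rw [← aux_sq_mid (fun i => D.mulVec q.1 i - q.2 i + c i)
        (fun i => D.mulVec p.1 i - p.2 i + c i)]
      exact Finset.sum_congr rfl fun i _ => by rw [hDm i]; simp only [hym]; ring
    have e3 : ∑ i, |ym i| ≤ (∑ i, |q.2 i| + ∑ i, |p.2 i|)/2 := by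
      simpa [hym] using aux_abs_mid q.2 p.2
    rw [e1, e2]
    have := mul_le_mul_of_nonneg_left e3 hμ.le
    nlinarith [hlam2]
  have hple := hp (xm, ym)
  simp only at hple
  have hzero : (1/2)*G1 + (lam^2/2)*G2 ≤ 0 := by
    rw [hpq] at hple
    rw [hpq] at hmid
    linarith
  have hG1z : G1 = 0 := by nlinarith [mul_nonneg hlam2.le hG2n]
  have hG2z : G2 = 0 := by nlinarith
  -- deduce p.1 = q.1
  have hx1 : A.mulVec (fun j => q.1 j - p.1 j) = 0 := by
    funext i
    have := (Finset.sum_eq_zero_iff_of_nonneg (fun i _ => sq_nonneg _)).1 hG1z i (Finset.mem_univ i)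
    have h := pow_eq_zero_iff (n := 2) (by norm_num) |>.1 this
    have h2 : A.mulVec q.1 i - A.mulVec p.1 i = 0 := by
      have : ((A.mulVec q.1 i - b i) - (A.mulVec p.1 i - b i))/2 = 0 := h
      linarith [this]
    have hsub : A.mulVec (fun j => q.1 j - p.1 j) i = A.mulVec q.1 i - A.mulVec p.1 i := by
      simp only [Matrix.mulVec, dotProduct]
      rw [← Finset.sum_sub_distrib]
      exact Finset.sum_congr rfl fun j _ => by ring
    rw [hsub, h2]; rfl
  have hx : q.1 = p.1 := by
    have := hA _ hx1
    funext j
    have := congrFun this j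
    simp only [Pi.zero_apply] at this
    linarith
  -- deduce p.2 = q.2
  have hy : q.2 = p.2 := by
    funext i
    have := (Finset.sum_eq_zero_iff_of_nonneg (fun i _ => sq_nonneg _)).1 hG2z i (Finset.mem_univ i)
    have h := pow_eq_zero_iff (n := 2) (by norm_num) |>.1 this
    have hD : D.mulVec q.1 i = D.mulVec p.1 i := by rw [hx]
    have : ((D.mulVec q.1 i - q.2 i + c i) - (D.mulVec p.1 i - p.2 i + c i))/2 = 0 := h
    rw [hD] at this
    linarith
  exact Prod.ext hx hy
end

section
/- Suppose A has full column rank and let (x̂, ŷ) be the unique global minimizer of f_joint on ℝ^n × ℝ^ℓ. Then x̂ is the unique global minimizer of f_proj on ℝ^n: f_proj(x̂) ≤ f_proj(x) for all x ∈ ℝ^n, and any x̄ ∈ ℝ^n with f_proj(x̄) = f_proj(x̂) satisfies x̄ = x̂. -/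
open Matrix BigOperators

noncomputable def shrinkZ {n l : ℕ} (D : Matrix (Fin l) (Fin n) ℝ) (c : Fin l → ℝ)
    (μ lam : ℝ) (x : Fin n → ℝ) : Fin l → ℝ :=
  fun i => Real.sign (D.mulVec x i + c i) * max (|D.mulVec x i + c i| - μ / lam^2) 0

noncomputable def fproj {m n l : ℕ} (A : Matrix (Fin m) (Fin n) ℝ) (b : Fin m → ℝ)
    (D : Matrix (Fin l) (Fin n) ℝ) (c : Fin l → ℝ) (μ lam : ℝ)
    (x : Fin n → ℝ) : ℝ :=
  fjoint A b D c μ lam x (shrinkZ D c μ lam x)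

lemma key_scalar (a μ t y : ℝ) (ha : 0 < a) (hμ : 0 < μ) :
    a^2/2 * (t - Real.sign t * max (|t| - μ/a^2) 0)^2
      + μ * |Real.sign t * max (|t| - μ/a^2) 0|
    ≤ a^2/2 * (t - y)^2 + μ * |y| := by
  have ha2 : (0:ℝ) < a^2 := by positivity
  obtain ⟨s, hseq⟩ : ∃ s : ℝ, s = μ / a^2 := ⟨_, rfl⟩
  rw [← hseq]
  have has : a^2 * s = μ := by rw [hseq]; field_simp
  have hspos : 0 < s := by rw [hseq]; positivity
  clear hseq
  rcases le_or_gt (|t| - s) 0 with h0 | h0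
  · rw [max_eq_right h0]
    simp only [mul_zero, sub_zero, abs_zero]
    have h1 : a^2 * |t| ≤ μ := by nlinarith [abs_nonneg t]
    have h2 : a^2 * (t * y) ≤ μ * |y| := by
      have : t * y ≤ |t| * |y| := by
        calc t * y ≤ |t * y| := le_abs_self _
        _ = |t| * |y| := abs_mul t y
      nlinarith [abs_nonneg y, abs_nonneg t, mul_le_mul_of_nonneg_right h1 (abs_nonneg y)]
    nlinarith [sq_nonneg y]
  · rw [max_eq_left h0.le]
    have ht : t ≠ 0 := by
      intro h; rw [h] at h0; simp at h0; linarith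
    rcases ht.lt_or_gt with htn | htp
    · rw [Real.sign_of_neg htn, abs_of_neg htn]
      have hz : -1 * (-t - s) = t + s := by ring
      rw [hz]
      have hzn : t + s < 0 := by rw [abs_of_neg htn] at h0; linarith
      rw [abs_of_neg hzn]
      have hkey : a^2/2*(t-y)^2 + μ*|y| - (a^2/2*(t-(t+s))^2 + μ*(-(t+s)))
          = a^2/2*(y-t-s)^2 + μ*(|y|+y) := by
        linear_combination (y - t - s) * has
      have h3 : 0 ≤ a^2/2*(y-t-s)^2 := by positivity
      have h4 : 0 ≤ μ*(|y|+y) := mul_nonneg hμ.le (by linarith [neg_abs_le y])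
      linarith
    · rw [Real.sign_of_pos htp, abs_of_pos htp]
      have hz : 1 * (t - s) = t - s := by ring
      rw [hz]
      have hzp : 0 < t - s := by rw [abs_of_pos htp] at h0; linarith
      rw [abs_of_pos hzp]
      have hkey : a^2/2*(t-y)^2 + μ*|y| - (a^2/2*(t-(t-s))^2 + μ*(t-s))
          = a^2/2*(y-t+s)^2 + μ*(|y|-y) := by
        linear_combination (t - s - y) * has
      have h3 : 0 ≤ a^2/2*(y-t+s)^2 := by positivity
      have h4 : 0 ≤ μ*(|y|-y) := mul_nonneg hμ.le (by linarith [le_abs_self y])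
      linarith

lemma shrink_le {m n l : ℕ} (A : Matrix (Fin m) (Fin n) ℝ) (b : Fin m → ℝ)
    (D : Matrix (Fin l) (Fin n) ℝ) (c : Fin l → ℝ) (μ lam : ℝ)
    (hμ : 0 < μ) (hlam : 0 < lam) (x : Fin n → ℝ) (y : Fin l → ℝ) :
    fjoint A b D c μ lam x (shrinkZ D c μ lam x) ≤ fjoint A b D c μ lam x y := by
  unfold fjoint
  have h2 : lam^2/2 * ∑ i, (D.mulVec x i - shrinkZ D c μ lam x i + c i)^2
      + μ * ∑ i, |shrinkZ D c μ lam x i|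
      ≤ lam^2/2 * ∑ i, (D.mulVec x i - y i + c i)^2 + μ * ∑ i, |y i| := by
    rw [Finset.mul_sum, Finset.mul_sum, Finset.mul_sum, Finset.mul_sum,
      ← Finset.sum_add_distrib, ← Finset.sum_add_distrib]
    apply Finset.sum_le_sum
    intro i _
    have hk := key_scalar lam μ (D.mulVec x i + c i) (y i) hlam hμ
    unfold shrinkZ
    have e1 : D.mulVec x i - Real.sign (D.mulVec x i + c i) *
        max (|D.mulVec x i + c i| - μ/lam^2) 0 + c i
        = (D.mulVec x i + c i) - Real.sign (D.mulVec x i + c i) *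
        max (|D.mulVec x i + c i| - μ/lam^2) 0 := by ring
    have e2 : D.mulVec x i - y i + c i = (D.mulVec x i + c i) - y i := by ring
    rw [e1, e2]
    exact hk
  linarith

theorem stmt7 {m n l : ℕ} (A : Matrix (Fin m) (Fin n) ℝ) (b : Fin m → ℝ)
    (D : Matrix (Fin l) (Fin n) ℝ) (c : Fin l → ℝ) (μ lam : ℝ)
    (hμ : 0 < μ) (hlam : 0 < lam)
    (hA : ∀ x : Fin n → ℝ, A.mulVec x = 0 → x = 0)
    (xh : Fin n → ℝ) (yh : Fin l → ℝ)
    (hmin : ∀ (x : Fin n → ℝ) (y : Fin l → ℝ),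
      fjoint A b D c μ lam xh yh ≤ fjoint A b D c μ lam x y)
    (huniq : ∀ (x : Fin n → ℝ) (y : Fin l → ℝ),
      (∀ (x' : Fin n → ℝ) (y' : Fin l → ℝ),
        fjoint A b D c μ lam x y ≤ fjoint A b D c μ lam x' y') →
      x = xh ∧ y = yh) :
    (∀ x : Fin n → ℝ, fproj A b D c μ lam xh ≤ fproj A b D c μ lam x)
    ∧ ∀ xb : Fin n → ℝ, fproj A b D c μ lam xb = fproj A b D c μ lam xh → xb = xh := by
  have hle : ∀ x : Fin n → ℝ, fproj A b D c μ lam xh ≤ fproj A b D c μ lam x := by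
    intro x
    calc fproj A b D c μ lam xh ≤ fjoint A b D c μ lam xh yh :=
          shrink_le A b D c μ lam hμ hlam xh yh
      _ ≤ fjoint A b D c μ lam x (shrinkZ D c μ lam x) := hmin _ _
      _ = fproj A b D c μ lam x := rfl
  refine ⟨hle, ?_⟩
  intro xb hb
  have hmin' : ∀ (x' : Fin n → ℝ) (y' : Fin l → ℝ),
      fjoint A b D c μ lam xb (shrinkZ D c μ lam xb) ≤ fjoint A b D c μ lam x' y' := by
    intro x' y'
    have h1 : fjoint A b D c μ lam xb (shrinkZ D c μ lam xb) ≤ fjoint A b D c μ lam xh yh := by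
      calc fjoint A b D c μ lam xb (shrinkZ D c μ lam xb)
          = fproj A b D c μ lam xh := hb
        _ ≤ fjoint A b D c μ lam xh yh := shrink_le A b D c μ lam hμ hlam xh yh
    exact h1.trans (hmin x' y')
  exact (huniq xb (shrinkZ D c μ lam xb) hmin').1
end

section
/- Suppose A has full column rank, c ∈ ℝ^ℓ is fixed, and μ, λ > 0. Then every local minimizer of f_proj is a global minimizer: if x̄ ∈ ℝ^n and there exists a neighborhood U of x̄ such that f_proj(x) ≥ f_proj(x̄) for all x ∈ U, then f_proj(x̄) ≤ f_proj(x) for all x ∈ ℝ^n. -/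
open Matrix BigOperators

-- 1D soft-threshold minimization
lemma shrink_min (a v t : ℝ) (ha : 0 ≤ a) :
    (v - Real.sign v * max (|v| - a) 0)^2 / 2 + a * |Real.sign v * max (|v| - a) 0|
      ≤ (v - t)^2 / 2 + a * |t| := by
  rcases le_or_gt |v| a with h | h
  · have hmax : max (|v| - a) 0 = 0 := max_eq_right (by linarith)
    rw [hmax, mul_zero, sub_zero, abs_zero, mul_zero, add_zero]
    have h1 : v * t ≤ a * |t| := by
      calc v * t ≤ |v * t| := le_abs_self _
        _ = |v| * |t| := abs_mul _ _
        _ ≤ a * |t| := mul_le_mul_of_nonneg_right h (abs_nonneg t)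
    nlinarith [sq_nonneg t]
  · have hmax : max (|v| - a) 0 = |v| - a := max_eq_left (by linarith)
    rw [hmax]
    rcases lt_trichotomy v 0 with hv | hv | hv
    · rw [Real.sign_of_neg hv, abs_of_neg hv]
      have hS : (-1 : ℝ) * (-v - a) = v + a := by ring
      rw [hS, abs_of_neg (by rw [abs_of_neg hv] at h; linarith)]
      nlinarith [sq_nonneg (v - t + a), mul_le_mul_of_nonneg_left (neg_abs_le t) ha]
    · exfalso; rw [hv, abs_zero] at h; linarith
    · rw [abs_of_pos hv] at h
      rw [Real.sign_of_pos hv, abs_of_pos hv, one_mul]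
      rw [abs_of_pos (by linarith : (0:ℝ) < v - a)]
      nlinarith [sq_nonneg (v - t - a), mul_le_mul_of_nonneg_left (le_abs_self t) ha]

lemma fproj_le_fjoint {m n l : ℕ} (A : Matrix (Fin m) (Fin n) ℝ) (b : Fin m → ℝ)
    (D : Matrix (Fin l) (Fin n) ℝ) (c : Fin l → ℝ) (μ lam : ℝ)
    (hμ : 0 ≤ μ) (hlam : 0 < lam) (x : Fin n → ℝ) (y : Fin l → ℝ) :
    fproj A b D c μ lam x ≤ fjoint A b D c μ lam x y := by
  have hl2 : (0:ℝ) < lam^2 := by positivity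
  have key : ∀ i : Fin l,
      (lam^2/2) * (D.mulVec x i - shrinkZ D c μ lam x i + c i)^2 + μ * |shrinkZ D c μ lam x i|
        ≤ (lam^2/2) * (D.mulVec x i - y i + c i)^2 + μ * |y i| := by
    intro i
    set v := D.mulVec x i + c i with hv
    have hs : shrinkZ D c μ lam x i = Real.sign v * max (|v| - μ/lam^2) 0 := rfl
    have h := shrink_min (μ/lam^2) v (y i) (div_nonneg hμ hl2.le)
    have h2 := mul_le_mul_of_nonneg_left h hl2.le
    have e : ∀ w : ℝ, lam^2 * ((v - w)^2/2 + μ/lam^2 * |w|) = lam^2/2 * (v - w)^2 + μ * |w| := by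
      intro w; field_simp
    rw [e, e] at h2
    have e1 : D.mulVec x i - shrinkZ D c μ lam x i + c i = v - shrinkZ D c μ lam x i := by
      rw [hv]; ring
    have e2 : D.mulVec x i - y i + c i = v - y i := by rw [hv]; ring
    rw [e1, e2, hs]
    exact h2
  unfold fproj fjoint
  have hsum : (lam^2/2) * ∑ i, (D.mulVec x i - shrinkZ D c μ lam x i + c i)^2
      + μ * ∑ i, |shrinkZ D c μ lam x i|
      ≤ (lam^2/2) * ∑ i, (D.mulVec x i - y i + c i)^2 + μ * ∑ i, |y i| := by
    rw [Finset.mul_sum, Finset.mul_sum, Finset.mul_sum, Finset.mul_sum,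
      ← Finset.sum_add_distrib, ← Finset.sum_add_distrib]
    exact Finset.sum_le_sum fun i _ => key i
  linarith

lemma fjoint_convex {m n l : ℕ} (A : Matrix (Fin m) (Fin n) ℝ) (b : Fin m → ℝ)
    (D : Matrix (Fin l) (Fin n) ℝ) (c : Fin l → ℝ) (μ lam : ℝ) (hμ : 0 ≤ μ)
    (x₁ x₂ : Fin n → ℝ) (y₁ y₂ : Fin l → ℝ) (t : ℝ) (ht0 : 0 ≤ t) (ht1 : t ≤ 1) :
    fjoint A b D c μ lam (fun j => t * x₁ j + (1-t) * x₂ j) (fun i => t * y₁ i + (1-t) * y₂ i)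
      ≤ t * fjoint A b D c μ lam x₁ y₁ + (1-t) * fjoint A b D c μ lam x₂ y₂ := by
  have hmv : ∀ (k : ℕ) (M : Matrix (Fin k) (Fin n) ℝ) (i : Fin k),
      M.mulVec (fun j => t * x₁ j + (1-t) * x₂ j) i = t * M.mulVec x₁ i + (1-t) * M.mulVec x₂ i := by
    intro k M i
    simp only [mulVec, dotProduct, Finset.mul_sum, ← Finset.sum_add_distrib]
    exact Finset.sum_congr rfl fun j _ => by ring
  have sqc : ∀ u v : ℝ, (t * u + (1-t) * v)^2 ≤ t * u^2 + (1-t) * v^2 := by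
    intro u v
    nlinarith [sq_nonneg (u - v), mul_nonneg ht0 (sub_nonneg.mpr ht1)]
  have e1 : ∑ i, (A.mulVec (fun j => t * x₁ j + (1-t) * x₂ j) i - b i)^2
      ≤ t * ∑ i, (A.mulVec x₁ i - b i)^2 + (1-t) * ∑ i, (A.mulVec x₂ i - b i)^2 := by
    rw [Finset.mul_sum, Finset.mul_sum, ← Finset.sum_add_distrib]
    refine Finset.sum_le_sum fun i _ => ?_
    rw [hmv m A i]
    calc (t * A.mulVec x₁ i + (1-t) * A.mulVec x₂ i - b i)^2
        = (t * (A.mulVec x₁ i - b i) + (1-t) * (A.mulVec x₂ i - b i))^2 := by ring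
      _ ≤ _ := sqc _ _
  have e2 : ∑ i, (D.mulVec (fun j => t * x₁ j + (1-t) * x₂ j) i
        - (t * y₁ i + (1-t) * y₂ i) + c i)^2
      ≤ t * ∑ i, (D.mulVec x₁ i - y₁ i + c i)^2 + (1-t) * ∑ i, (D.mulVec x₂ i - y₂ i + c i)^2 := by
    rw [Finset.mul_sum, Finset.mul_sum, ← Finset.sum_add_distrib]
    refine Finset.sum_le_sum fun i _ => ?_
    rw [hmv l D i]
    calc (t * D.mulVec x₁ i + (1-t) * D.mulVec x₂ i - (t * y₁ i + (1-t) * y₂ i) + c i)^2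
        = (t * (D.mulVec x₁ i - y₁ i + c i) + (1-t) * (D.mulVec x₂ i - y₂ i + c i))^2 := by ring
      _ ≤ _ := sqc _ _
  have e3 : ∑ i, |t * y₁ i + (1-t) * y₂ i| ≤ t * ∑ i, |y₁ i| + (1-t) * ∑ i, |y₂ i| := by
    rw [Finset.mul_sum, Finset.mul_sum, ← Finset.sum_add_distrib]
    refine Finset.sum_le_sum fun i _ => ?_
    calc |t * y₁ i + (1-t) * y₂ i| ≤ |t * y₁ i| + |(1-t) * y₂ i| := abs_add_le _ _
      _ = t * |y₁ i| + (1-t) * |y₂ i| := by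
          rw [abs_mul, abs_mul, abs_of_nonneg ht0, abs_of_nonneg (by linarith : (0:ℝ) ≤ 1-t)]
  unfold fjoint
  have hl2 : (0:ℝ) ≤ lam^2/2 := by positivity
  nlinarith [mul_le_mul_of_nonneg_left e1 (by norm_num : (0:ℝ) ≤ 1/2),
    mul_le_mul_of_nonneg_left e2 hl2, mul_le_mul_of_nonneg_left e3 hμ]

theorem stmt8' {m n l : ℕ} (A : Matrix (Fin m) (Fin n) ℝ) (b : Fin m → ℝ)
    (D : Matrix (Fin l) (Fin n) ℝ) (c : Fin l → ℝ) (μ lam : ℝ)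
    (hμ : 0 < μ) (hlam : 0 < lam)
    (xb : Fin n → ℝ)
    (hloc : ∃ U ∈ nhds xb, ∀ x ∈ U, fproj A b D c μ lam xb ≤ fproj A b D c μ lam x) :
    ∀ x : Fin n → ℝ, fproj A b D c μ lam xb ≤ fproj A b D c μ lam x := by
  intro x
  obtain ⟨U, hU, hmin⟩ := hloc
  obtain ⟨ε, hε, hball⟩ := Metric.mem_nhds_iff.mp hU
  by_cases hx : x = xb
  · rw [hx]
  · have hN : 0 < ‖x - xb‖ := norm_pos_iff.mpr (sub_ne_zero_of_ne hx)
    set N := ‖x - xb‖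
    set t := min (1/2 : ℝ) (ε / (2 * (N + 1))) with htdef
    have ht0 : 0 < t := lt_min (by norm_num) (by positivity)
    have ht1 : t ≤ 1 := le_trans (min_le_left _ _) (by norm_num)
    set xt : Fin n → ℝ := fun j => t * x j + (1-t) * xb j with hxt
    have hsub : xt - xb = t • (x - xb) := by
      funext j
      simp only [Pi.sub_apply, Pi.smul_apply, smul_eq_mul, hxt]
      ring
    have hdist : dist xt xb < ε := by
      rw [dist_eq_norm, hsub, norm_smul, Real.norm_eq_abs, abs_of_pos ht0]
      have h2 : t ≤ ε / (2 * (N + 1)) := min_le_right _ _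
      have h3 : t * (2 * (N + 1)) ≤ ε := by
        rw [← le_div_iff₀ (by positivity)]; exact h2
      nlinarith
    have h1 := hmin xt (hball hdist)
    have h2 : fproj A b D c μ lam xt ≤ t * fproj A b D c μ lam x
        + (1-t) * fproj A b D c μ lam xb := by
      calc fproj A b D c μ lam xt
          ≤ fjoint A b D c μ lam xt
              (fun i => t * shrinkZ D c μ lam x i + (1-t) * shrinkZ D c μ lam xb i) :=
            fproj_le_fjoint A b D c μ lam hμ.le hlam xt _
        _ ≤ t * fjoint A b D c μ lam x (shrinkZ D c μ lam x)
              + (1-t) * fjoint A b D c μ lam xb (shrinkZ D c μ lam xb) :=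
            fjoint_convex A b D c μ lam hμ.le x xb _ _ t ht0.le ht1
        _ = t * fproj A b D c μ lam x + (1-t) * fproj A b D c μ lam xb := rfl
    have h3 : t * fproj A b D c μ lam xb ≤ t * fproj A b D c μ lam x := by linarith
    exact le_of_mul_le_mul_left h3 ht0

theorem stmt8 {m n l : ℕ} (A : Matrix (Fin m) (Fin n) ℝ) (b : Fin m → ℝ)
    (D : Matrix (Fin l) (Fin n) ℝ) (c : Fin l → ℝ) (μ lam : ℝ)
    (hμ : 0 < μ) (hlam : 0 < lam)
    (hA : ∀ x : Fin n → ℝ, A.mulVec x = 0 → x = 0)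
    (xb : Fin n → ℝ)
    (hloc : ∃ U ∈ nhds xb, ∀ x ∈ U, fproj A b D c μ lam xb ≤ fproj A b D c μ lam x) :
    ∀ x : Fin n → ℝ, fproj A b D c μ lam xb ≤ fproj A b D c μ lam x :=
  stmt8' A b D c μ lam hμ hlam xb hloc
end

section
/- Suppose A has full column rank and λ > 0. Then f_joint is coercive on ℝ^n × ℝ^ℓ: f_joint(x,y) → ∞ as ‖(x,y)‖ → ∞; equivalently, every sublevel set {(x,y) : f_joint(x,y) ≤ t} is bounded. -/
open Matrix BigOperators

theorem stmt13 {m n l : ℕ} (A : Matrix (Fin m) (Fin n) ℝ) (b : Fin m → ℝ)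
    (D : Matrix (Fin l) (Fin n) ℝ) (c : Fin l → ℝ) (μ lam : ℝ)
    (hμ : 0 < μ) (hlam : 0 < lam)
    (hA : ∀ x : Fin n → ℝ, A.mulVec x = 0 → x = 0) :
    (Filter.Tendsto (fun p : (Fin n → ℝ) × (Fin l → ℝ) => fjoint A b D c μ lam p.1 p.2)
        (Filter.cocompact _) Filter.atTop)
    ∧ ∀ t : ℝ, Bornology.IsBounded
        {p : (Fin n → ℝ) × (Fin l → ℝ) | fjoint A b D c μ lam p.1 p.2 ≤ t} := by
  obtain ⟨g, hg⟩ := LinearMap.exists_leftInverse_of_injective (Matrix.mulVecLin A)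
    (LinearMap.ker_eq_bot'.2 (fun x hx => hA x hx))
  set G := LinearMap.toContinuousLinearMap g with hG
  have key : ∀ t : ℝ, Bornology.IsBounded
      {p : (Fin n → ℝ) × (Fin l → ℝ) | fjoint A b D c μ lam p.1 p.2 ≤ t} := by
    intro t
    rw [isBounded_iff_forall_norm_le]
    refine ⟨max (t/μ) (‖G‖ * (Real.sqrt (2*t) + ‖b‖)), ?_⟩
    rintro ⟨x, y⟩ hp
    simp only [Set.mem_setOf_eq, fjoint] at hp
    have hS1 : (0:ℝ) ≤ ∑ i, (A.mulVec x i - b i)^2 :=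
      Finset.sum_nonneg fun i _ => sq_nonneg _
    have hS2 : (0:ℝ) ≤ ∑ i, (D.mulVec x i - y i + c i)^2 :=
      Finset.sum_nonneg fun i _ => sq_nonneg _
    have hS3 : (0:ℝ) ≤ ∑ i, |y i| :=
      Finset.sum_nonneg fun i _ => abs_nonneg _
    have hlam2 : (0:ℝ) ≤ lam^2/2 := by positivity
    have h1 : ∑ i, (A.mulVec x i - b i)^2 ≤ 2*t := by
      nlinarith [mul_nonneg hlam2 hS2, mul_nonneg hμ.le hS3]
    have h3 : μ * ∑ i, |y i| ≤ t := by
      nlinarith [mul_nonneg hlam2 hS2]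
    have ht : (0:ℝ) ≤ t := le_trans (mul_nonneg hμ.le hS3) h3
    -- bound on y
    have hy : ‖y‖ ≤ t/μ := by
      have hsum : ∑ i, |y i| ≤ t/μ := by
        rw [le_div_iff₀ hμ]; linarith [h3]
      refine (pi_norm_le_iff_of_nonneg (div_nonneg ht hμ.le)).2 fun i => ?_
      have : |y i| ≤ ∑ j, |y j| :=
        Finset.single_le_sum (f := fun j => |y j|) (fun j _ => abs_nonneg _) (Finset.mem_univ i)
      simpa [Real.norm_eq_abs] using this.trans hsum
    -- bound on x
    have hx1 : ∀ i, |A.mulVec x i - b i| ≤ Real.sqrt (2*t) := by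
      intro i
      have h2t : (A.mulVec x i - b i)^2 ≤ 2*t :=
        le_trans (Finset.single_le_sum (f := fun j => (A.mulVec x j - b j)^2) (fun j _ => sq_nonneg _) (Finset.mem_univ i)) h1
      calc |A.mulVec x i - b i| = Real.sqrt ((A.mulVec x i - b i)^2) :=
            (Real.sqrt_sq_eq_abs _).symm
        _ ≤ Real.sqrt (2*t) := Real.sqrt_le_sqrt h2t
    have hAxb : ‖A.mulVec x - b‖ ≤ Real.sqrt (2*t) :=
      (pi_norm_le_iff_of_nonneg (Real.sqrt_nonneg _)).2 fun i => by
        simpa [Real.norm_eq_abs] using hx1 i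
    have hAx : ‖A.mulVec x‖ ≤ Real.sqrt (2*t) + ‖b‖ := by
      calc ‖A.mulVec x‖ = ‖(A.mulVec x - b) + b‖ := by rw [sub_add_cancel]
        _ ≤ ‖A.mulVec x - b‖ + ‖b‖ := norm_add_le _ _
        _ ≤ Real.sqrt (2*t) + ‖b‖ := by linarith
    have hGx : G (A.mulVec x) = x := by
      have := LinearMap.congr_fun hg x
      simpa [hG, Matrix.mulVecLin_apply] using this
    have hxn : ‖x‖ ≤ ‖G‖ * (Real.sqrt (2*t) + ‖b‖) := by
      calc ‖x‖ = ‖G (A.mulVec x)‖ := by rw [hGx]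
        _ ≤ ‖G‖ * ‖A.mulVec x‖ := G.le_opNorm _
        _ ≤ ‖G‖ * (Real.sqrt (2*t) + ‖b‖) :=
            mul_le_mul_of_nonneg_left hAx (norm_nonneg _)
    rw [Prod.norm_def]
    exact max_le (hxn.trans (le_max_right _ _)) (hy.trans (le_max_left _ _))
  refine ⟨?_, key⟩
  rw [Filter.tendsto_atTop]
  intro t
  rw [Filter.eventually_iff, Filter.mem_cocompact]
  refine ⟨closure {p : (Fin n → ℝ) × (Fin l → ℝ) | fjoint A b D c μ lam p.1 p.2 ≤ t},
    (key t).isCompact_closure, ?_⟩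
  intro p hp
  simp only [Set.mem_compl_iff] at hp
  by_contra h
  exact hp (subset_closure (show fjoint A b D c μ lam p.1 p.2 ≤ t from le_of_not_ge h))
end
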